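/- Let g be a linear operator on a finite-dimensional vector space over a field of characteristic zero such that (g^m - 1)^2 = 0 for some positive integer m. If -g is unipotent, then (g + 1)^2 = 0. -/

import Mathlib

open Polynomial

/-- If `(g^m - 1)^2 = 0` for some positive integer `m` and `-g` is unipotent,
then `(g + 1)^2 = 0`. -/
theorem lemma_level2_neg_unipotent {K V : Type*} [Field K] [CharZero K] [AddCommGroup V]
    [Module K V] [FiniteDimensional K V] (g : Module.End K V) (m : ℕ) (hm : 0 < m)
    (h : (g ^ m - 1) ^ 2 = 0) (hunip : ∃ N : ℕ, (g + 1) ^ N = 0) :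
    (g + 1) ^ 2 = 0 := by
  obtain ⟨N, hN⟩ := hunip
  have hnil : IsNilpotent (g + 1) := ⟨N, hN⟩
  set n := 2 * m with hn
  have hn0 : 0 < n := by omega
  -- reduce to even exponent n = 2*m
  have h2 : (g ^ n - 1) ^ 2 = 0 := by
    have key : (g ^ n - 1) ^ 2 = (g ^ m - 1) ^ 2 * (g ^ m + 1) ^ 2 := by
      have hpoly : ((X : K[X]) ^ n - 1) ^ 2 = ((X : K[X]) ^ m - 1) ^ 2 * ((X : K[X]) ^ m + 1) ^ 2 := by
        rw [hn]; ring
      have := congrArg (aeval g) hpoly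
      simpa using this
    rw [key, h, zero_mul]
  -- X + 1 divides X^n - 1 in K[X]
  have hdvd1 : (X + 1 : K[X]) ∣ X ^ n - 1 := by
    have := Polynomial.X_sub_C_dvd_sub_C_eval (a := (-1 : K)) (p := (X : K[X]) ^ n - 1)
    simpa [hn, pow_mul] using this
  obtain ⟨T, hT⟩ := hdvd1
  -- compute T.eval (-1) = -n via derivative
  have hTeval : T.eval (-1 : K) = -(n : K) := by
    have hd := congrArg (eval (-1 : K)) (congrArg derivative hT)
    have hodd : Odd (n - 1) := ⟨m - 1, by omega⟩
    simp [derivative_mul, derivative_X_pow, hodd.neg_one_pow] at hd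
    exact hd.symm
  -- X + 1 divides T + C n
  have hdvd2 : (X + 1 : K[X]) ∣ T + C (n : K) := by
    have := Polynomial.X_sub_C_dvd_sub_C_eval (a := (-1 : K)) (p := T)
    rw [hTeval] at this
    simpa [sub_neg_eq_add, map_neg, sub_eq_add_neg] using this
  obtain ⟨R, hR⟩ := hdvd2
  -- push to End
  set u := g + 1 with hu
  have haevalX1 : aeval g (X + 1 : K[X]) = u := by simp [hu]
  have hTend : aeval g T = u * aeval g R - algebraMap K _ (n : K) := by
    have := congrArg (aeval g) hR
    simp only [map_add, map_mul, haevalX1, aeval_C] at this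
    exact eq_sub_of_add_eq this
  have hcomm : Commute u (aeval g R) := by
    have := (Commute.all (X + 1 : K[X]) R).map (aeval g : K[X] →ₐ[K] Module.End K V)
    simpa [haevalX1] using this
  have hnilmul : IsNilpotent (u * aeval g R) := hcomm.isNilpotent_mul_right hnil
  have hunitc : IsUnit (algebraMap K (Module.End K V) (-(n : K))) := by
    refine (isUnit_iff_ne_zero.mpr ?_).map (algebraMap K (Module.End K V))
    simp
    omega
  have hunitT : IsUnit (aeval g T) := by
    rw [hTend, sub_eq_add_neg, ← map_neg]
    exact hnilmul.isUnit_add_right_of_commute hunitc (Algebra.commute_algebraMap_right _ _)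
  -- conclude
  have hfact : g ^ n - 1 = u * aeval g T := by
    have := congrArg (aeval g) hT
    simpa [haevalX1] using this
  have hcommT : Commute u (aeval g T) := by
    have := (Commute.all (X + 1 : K[X]) T).map (aeval g : K[X] →ₐ[K] Module.End K V)
    simpa [haevalX1] using this
  have hsq : u ^ 2 * (aeval g T) ^ 2 = 0 := by
    rw [← hcommT.mul_pow, ← hfact]; exact h2
  have hunitT2 : IsUnit ((aeval g T) ^ 2) := hunitT.pow 2
  obtain ⟨w, hw⟩ := hunitT2
  have : u ^ 2 = u ^ 2 * ((aeval g T) ^ 2 * ↑w⁻¹) := by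
    rw [← hw, Units.mul_inv, mul_one]
  rw [this, ← mul_assoc, hsq, zero_mul]
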